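/- Let φ be an N-function of class C¹ on [0,∞) and C² on (0,∞) with φ'(t) ∼ t φ''(t) uniformly in t > 0, and let φ_a denote its shifted N-function. Then there is a constant c, depending only on the characteristics of φ, such that φ_a(st) ≤ c s² φ_a(t) for all s ∈ [0,1], all a ≥ 0, and all t ∈ [0, a]. -/

import Mathlib

open Set Filter MeasureTheory

def IsNFunction (ψ ψ' : ℝ → ℝ) : Prop :=
  ψ 0 = 0 ∧
  (∀ t ∈ Set.Ici (0:ℝ), HasDerivWithinAt ψ (ψ' t) (Set.Ici 0) t) ∧
  MonotoneOn ψ' (Set.Ici 0) ∧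
  (∀ t ∈ Set.Ici (0:ℝ), ContinuousWithinAt ψ' (Set.Ici t) t) ∧
  ψ' 0 = 0 ∧
  (∀ t > (0:ℝ), 0 < ψ' t) ∧
  Filter.Tendsto ψ' Filter.atTop Filter.atTop

noncomputable def shiftFn (φ' : ℝ → ℝ) (a t : ℝ) : ℝ :=
  ∫ s in (0:ℝ)..t, φ' (a + s) * s / (a + s)



lemma my_doubling (c₂ : ℝ) (φ' φ'' : ℝ → ℝ)
    (hd : ∀ t > (0:ℝ), HasDerivAt φ' (φ'' t) t)
    (hchar : ∀ t > (0:ℝ), t * φ'' t ≤ c₂ * φ' t)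
    (a : ℝ) (ha : 0 < a) : φ' (2*a) ≤ (2:ℝ)^c₂ * φ' a := by
  set f : ℝ → ℝ := fun u => φ' u * u ^ (-c₂) with hf
  have hder : ∀ u ∈ Ioo a (2*a), HasDerivAt f
      (φ'' u * u ^ (-c₂) + φ' u * (-c₂ * u ^ (-c₂-1))) u := by
    intro u hu
    have hu0 : 0 < u := lt_trans ha hu.1
    exact (hd u hu0).mul ((Real.hasDerivAt_rpow_const (Or.inl hu0.ne')))
  have hanti : AntitoneOn f (Icc a (2*a)) := by
    apply antitoneOn_of_deriv_nonpos (convex_Icc _ _)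
    · apply ContinuousOn.mul
      · intro u hu
        exact ((hd u (lt_of_lt_of_le ha hu.1)).continuousAt).continuousWithinAt
      · intro u hu
        exact (Real.continuousAt_rpow_const u (-c₂)
          (Or.inl (lt_of_lt_of_le ha hu.1).ne')).continuousWithinAt
    · intro u hu
      rw [interior_Icc] at hu
      exact (hder u hu).differentiableAt.differentiableWithinAt
    · intro u hu
      rw [interior_Icc] at hu
      have hu0 : 0 < u := lt_trans ha hu.1
      rw [(hder u hu).deriv]
      have h1 : u ^ (-c₂) = u ^ (-c₂ - 1) * u := by
        rw [← Real.rpow_add_one hu0.ne']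
        ring_nf
      have h2 : (0:ℝ) < u ^ (-c₂ - 1) := Real.rpow_pos_of_pos hu0 _
      have h3 := hchar u hu0
      calc φ'' u * u ^ (-c₂) + φ' u * (-c₂ * u ^ (-c₂-1))
          = u ^ (-c₂-1) * (u * φ'' u - c₂ * φ' u) := by rw [h1]; ring
        _ ≤ 0 := mul_nonpos_of_nonneg_of_nonpos h2.le (by linarith)
  have key : f (2*a) ≤ f a := hanti ⟨le_refl a, by linarith⟩ ⟨by linarith, le_refl _⟩ (by linarith)
  have h2a : (0:ℝ) < 2*a := by linarith
  have hrw : ((2:ℝ)*a) ^ (-c₂) = 2 ^ (-c₂) * a ^ (-c₂) :=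
    Real.mul_rpow (by norm_num) ha.le
  simp only [hf, hrw] at key
  have ha2 : (0:ℝ) < a ^ (-c₂) := Real.rpow_pos_of_pos ha _
  have h2c : (0:ℝ) < (2:ℝ) ^ (-c₂) := Real.rpow_pos_of_pos (by norm_num) _
  have : φ' (2*a) * 2 ^ (-c₂) ≤ φ' a := by
    have := le_of_mul_le_mul_right (by linarith [key] : φ' (2*a) * 2 ^ (-c₂) * a ^ (-c₂) ≤ φ' a * a ^ (-c₂)) ha2
    linarith
  have hinv : (2:ℝ) ^ (-c₂) = ((2:ℝ) ^ c₂)⁻¹ := Real.rpow_neg (by norm_num) _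
  have h2cp : (0:ℝ) < (2:ℝ) ^ c₂ := Real.rpow_pos_of_pos (by norm_num) _
  rw [hinv] at this
  calc φ' (2*a) = φ' (2*a) * ((2:ℝ)^c₂)⁻¹ * (2:ℝ)^c₂ := by field_simp
    _ ≤ φ' a * (2:ℝ)^c₂ := mul_le_mul_of_nonneg_right this h2cp.le
    _ = (2:ℝ)^c₂ * φ' a := mul_comm _ _

lemma my_cont (φ' φ'' : ℝ → ℝ)
    (hd : ∀ t > (0:ℝ), HasDerivAt φ' (φ'' t) t)
    (a : ℝ) (ha : 0 < a) (u : ℝ) :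
    ContinuousOn (fun σ => φ' (a + σ) * σ / (a + σ)) (Icc 0 u) := by
  intro σ hσ
  have hpos : 0 < a + σ := by have := hσ.1; linarith
  have h1 : ContinuousAt (fun σ : ℝ => φ' (a + σ)) σ :=
    ((hd (a + σ) hpos).continuousAt).comp (continuous_const.add continuous_id).continuousAt
  exact ((h1.mul continuousAt_id).div (continuous_const.add continuous_id).continuousAt
    hpos.ne').continuousWithinAt

theorem shifted_almost_quadratic (c₁ c₂ : ℝ) (hc₁ : 0 < c₁) (hc₂ : 0 < c₂) :
    ∃ c : ℝ, 0 < c ∧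
      ∀ φ φ' φ'' : ℝ → ℝ, IsNFunction φ φ' →
        (∀ t > (0:ℝ), HasDerivAt φ' (φ'' t) t) →
        (∀ t > (0:ℝ), ContinuousAt φ'' t) →
        (∀ t > (0:ℝ), c₁ * φ' t ≤ t * φ'' t ∧ t * φ'' t ≤ c₂ * φ' t) →
        ∀ s, 0 ≤ s → s ≤ 1 → ∀ a ≥ (0:ℝ), ∀ t, 0 ≤ t → t ≤ a →
          shiftFn φ' a (s * t) ≤ c * s ^ 2 * shiftFn φ' a t := by
  refine ⟨2 * (2:ℝ) ^ c₂, by positivity, ?_⟩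
  intro φ φ' φ'' hN hd hcont hchar s hs0 hs1 a ha t ht0 hta
  obtain ⟨hφ0, hderiv, hmono, hcontw, hφ'0, hφ'pos, htop⟩ := hN
  rcases eq_or_lt_of_le ht0 with h | ht
  · rw [← h, mul_zero]
    simp [shiftFn]
  have hapos : 0 < a := lt_of_lt_of_le ht hta
  have hdouble : φ' (2*a) ≤ (2:ℝ)^c₂ * φ' a :=
    my_doubling c₂ φ' φ'' hd (fun u hu => (hchar u hu).2) a hapos
  have hφa : 0 < φ' a := hφ'pos a hapos
  have hst : 0 ≤ s * t := mul_nonneg hs0 ht0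
  have hstt : s * t ≤ t := by nlinarith
  -- integrability facts
  have hint1 : IntervalIntegrable (fun σ => φ' (a + σ) * σ / (a + σ)) volume 0 t :=
    (my_cont φ' φ'' hd a hapos t).intervalIntegrable_of_Icc ht0
  have hint2 : IntervalIntegrable (fun σ => φ' (a + σ) * σ / (a + σ)) volume 0 (s*t) :=
    (my_cont φ' φ'' hd a hapos (s*t)).intervalIntegrable_of_Icc hst
  -- lower bound for shiftFn φ' a t
  have hlow : φ' a / (2*a) * (t^2/2) ≤ shiftFn φ' a t := by
    have hmono' : ∀ σ ∈ Icc (0:ℝ) t,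
        φ' a / (2*a) * σ ≤ φ' (a + σ) * σ / (a + σ) := by
      intro σ hσ
      have hσ0 := hσ.1
      have hσt := hσ.2
      have hφ : φ' a ≤ φ' (a + σ) := hmono (le_of_lt hapos) (by simp; linarith) (by linarith)
      have h1 : φ' a / (2*a) * σ = φ' a * σ / (2*a) := by ring
      rw [h1]
      exact div_le_div₀ (mul_nonneg (le_trans hφa.le hφ) hσ0) (by nlinarith) (by linarith) (by linarith)
    calc φ' a / (2*a) * (t^2/2) = ∫ σ in (0:ℝ)..t, φ' a / (2*a) * σ := by
          rw [intervalIntegral.integral_const_mul, integral_id]; ring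
      _ ≤ shiftFn φ' a t := by
          apply intervalIntegral.integral_mono_on ht0 _ hint1 hmono'
          exact (continuous_const.mul continuous_id).intervalIntegrable 0 t
  -- upper bound for shiftFn φ' a (s*t)
  have hup : shiftFn φ' a (s*t) ≤ φ' (2*a) / a * ((s*t)^2/2) := by
    have hmono' : ∀ σ ∈ Icc (0:ℝ) (s*t),
        φ' (a + σ) * σ / (a + σ) ≤ φ' (2*a) / a * σ := by
      intro σ hσ
      have hσ0 := hσ.1
      have hσt := hσ.2
      have hφ : φ' (a + σ) ≤ φ' (2*a) :=
        hmono (by simp; linarith) (by simp; linarith) (by linarith)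
      have h1 : φ' (2*a) / a * σ = φ' (2*a) * σ / a := by ring
      have hφpos : 0 ≤ φ' (2*a) := (hφ'pos (2*a) (by linarith)).le
      rw [h1]
      apply div_le_div₀ (by positivity) (by nlinarith) hapos (by linarith)
    calc shiftFn φ' a (s*t) ≤ ∫ σ in (0:ℝ)..(s*t), φ' (2*a) / a * σ := by
          apply intervalIntegral.integral_mono_on hst hint2 _ hmono'
          exact (continuous_const.mul continuous_id).intervalIntegrable 0 (s*t)
      _ = φ' (2*a) / a * ((s*t)^2/2) := by
          rw [intervalIntegral.integral_const_mul, integral_id]; ring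
  have h2cp : (0:ℝ) < (2:ℝ) ^ c₂ := Real.rpow_pos_of_pos (by norm_num) _
  calc shiftFn φ' a (s*t) ≤ φ' (2*a) / a * ((s*t)^2/2) := hup
    _ ≤ ((2:ℝ)^c₂ * φ' a) / a * ((s*t)^2/2) := by
        gcongr
    _ = (2 * (2:ℝ)^c₂ * s^2) * (φ' a / (2*a) * (t^2/2)) := by
        field_simp
    _ ≤ 2 * (2:ℝ)^c₂ * s^2 * shiftFn φ' a t := by
        apply mul_le_mul_of_nonneg_left hlow (by positivity)
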